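/- For every positive integer n there exists a constant C > 0 such that for every vector e ∈ ℝⁿ one has ∫_{B₄(0) \ B_{1/4}(0)} |e| / (1 + (e·η)²) dη ≤ C, where the integral is over the annulus {η ∈ ℝⁿ : 1/4 < |η| < 4} with respect to Lebesgue measure, |e| is the Euclidean norm, and e·η is the Euclidean inner product. -/

import Mathlib

open MeasureTheory

open Real Set in
private lemma oneD_aux (r : ℝ) : ∫ t in Set.Ioo (-4:ℝ) 4, r / (1 + (r*t)^2) ≤ π := by
  have hcont : Continuous (fun t : ℝ => r / (1 + (r*t)^2)) := by
    apply continuous_const.div (by continuity)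
    intro t; positivity
  rw [← MeasureTheory.integral_Ioc_eq_integral_Ioo,
      ← intervalIntegral.integral_of_le (by norm_num : (-4:ℝ) ≤ 4)]
  have h : ∀ t ∈ Set.uIcc (-4:ℝ) 4, HasDerivAt (fun s => arctan (r*s)) (r / (1 + (r*t)^2)) t := by
    intro t _
    have := (Real.hasDerivAt_arctan (r*t)).comp t ((hasDerivAt_id t).const_mul r)
    refine this.congr_deriv ?_
    simp [div_eq_mul_inv, mul_comm]
  rw [intervalIntegral.integral_eq_sub_of_hasDerivAt h (hcont.intervalIntegrable _ _)]
  have h1 := Real.arctan_lt_pi_div_two (r*4)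
  have h2 := Real.neg_pi_div_two_lt_arctan (r*(-4))
  linarith

private lemma oneD_nonneg (r : ℝ) (hr : 0 ≤ r) :
    0 ≤ ∫ t in Set.Ioo (-4:ℝ) 4, r / (1 + (r*t)^2) := by
  apply MeasureTheory.setIntegral_nonneg measurableSet_Ioo
  intro t _; positivity

theorem stmt0 (n : ℕ) (hn : 0 < n) :
    ∃ C : ℝ, 0 < C ∧ ∀ e : EuclideanSpace ℝ (Fin n),
      (∫ η in Metric.ball (0 : EuclideanSpace ℝ (Fin n)) 4 \
          Metric.ball (0 : EuclideanSpace ℝ (Fin n)) (1 / 4),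
        ‖e‖ / (1 + (inner ℝ e η : ℝ) ^ 2)) ≤ C := by
  have pi_pos := Real.pi_pos
  refine ⟨Real.pi * 8 ^ (n - 1), by positivity, ?_⟩
  intro e
  set A : Set (EuclideanSpace ℝ (Fin n)) :=
    Metric.ball (0 : EuclideanSpace ℝ (Fin n)) 4 \
      Metric.ball (0 : EuclideanSpace ℝ (Fin n)) (1/4) with hA
  by_cases he : e = 0
  · simp only [he, norm_zero, zero_div, integral_zero]
    positivity
  set r := ‖e‖ with hrdef
  have hr0 : 0 < r := norm_pos_iff.mpr he
  set i0 : Fin n := ⟨0, hn⟩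
  set b0 : EuclideanSpace ℝ (Fin n) := EuclideanSpace.single i0 (1:ℝ) with hb0def
  set u : EuclideanSpace ℝ (Fin n) := r⁻¹ • e with hudef
  have hu : ‖u‖ = 1 := by
    rw [hudef, norm_smul, norm_inv, Real.norm_eq_abs, abs_of_pos hr0, ← hrdef,
      inv_mul_cancel₀ hr0.ne']
  have hb0 : ‖b0‖ = 1 := by simp [hb0def]
  set L : EuclideanSpace ℝ (Fin n) ≃ₗᵢ[ℝ] EuclideanSpace ℝ (Fin n) :=
    Submodule.reflection (ℝ ∙ (b0 - u))ᗮ with hLdef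
  have hL : L b0 = u := Submodule.reflection_sub (by rw [hu, hb0])
  have hmp : MeasurePreserving L volume volume := L.measurePreserving
  have hemb : MeasurableEmbedding L := L.toHomeomorph.measurableEmbedding
  have hLA : L ⁻¹' A = A := by
    ext η
    simp only [hA, Set.mem_preimage, Set.mem_diff, Metric.mem_ball, dist_zero_right,
      L.norm_map]
  have hEe : e = r • u := by rw [hudef, smul_inv_smul₀ hr0.ne']
  have key : ∀ η : EuclideanSpace ℝ (Fin n), (inner ℝ e (L η) : ℝ) = r * η i0 := by
    intro η
    rw [hEe, real_inner_smul_left, ← hL, L.inner_map_map]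
    congr 1
    rw [hb0def]
    rw [EuclideanSpace.inner_single_left]
    simp
  have step1 : (∫ η in A, ‖e‖ / (1 + (inner ℝ e η : ℝ) ^ 2)) =
      ∫ η in A, r / (1 + (r * η i0) ^ 2) := by
    rw [← hmp.setIntegral_preimage_emb hemb (fun η => ‖e‖ / (1 + (inner ℝ e η : ℝ) ^ 2)) A, hLA]
    apply setIntegral_congr_fun (measurableSet_ball.diff measurableSet_ball)
    intro η _
    simp only [key η, hrdef]
  rw [step1]
  -- the box
  set S : Set (Fin n → ℝ) := Set.pi Set.univ (fun _ => Set.Ioo (-4:ℝ) 4) with hSdef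
  have hSmeas : MeasurableSet S := MeasurableSet.univ_pi (fun _ => measurableSet_Ioo)
  set φ := (MeasurableEquiv.toLp 2 (Fin n → ℝ)).symm with hφdef
  have hφmp : MeasurePreserving φ volume volume :=
    EuclideanSpace.volume_preserving_symm_measurableEquiv_toLp (Fin n)
  set B : Set (EuclideanSpace ℝ (Fin n)) := φ ⁻¹' S with hBdef
  have hBmeas : MeasurableSet B := φ.measurable hSmeas
  have hBvol : volume B ≠ ⊤ := by
    rw [hBdef, hφmp.measure_preimage hSmeas.nullMeasurableSet, hSdef, volume_pi_pi]
    simp [Real.volume_Ioo]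
  have hcont : Continuous (fun η : EuclideanSpace ℝ (Fin n) => r / (1 + (r * η i0) ^ 2)) := by
    apply continuous_const.div
    · have h : Continuous (fun η : EuclideanSpace ℝ (Fin n) => η i0) :=
        (continuous_apply i0).comp (PiLp.continuous_ofLp 2 (fun _ : Fin n => ℝ))
      exact continuous_const.add ((continuous_const.mul h).pow 2)
    · intro η; positivity
  have hint : IntegrableOn (fun η : EuclideanSpace ℝ (Fin n) => r / (1 + (r * η i0) ^ 2))
      B volume := by
    apply Measure.integrableOn_of_bounded hBvol hcont.aestronglyMeasurable (M := r)
    filter_upwards with η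
    rw [Real.norm_eq_abs, abs_of_nonneg (by positivity), div_le_iff₀ (by positivity)]
    nlinarith [sq_nonneg (r * η i0)]
  have hsub : A ⊆ B := by
    intro η hη
    have h1 : ‖η‖ < 4 := by
      have := hη.1
      rwa [Metric.mem_ball, dist_zero_right] at this
    intro i _
    have h2 : |η i| ≤ ‖η‖ := by
      have hcs := abs_real_inner_le_norm (EuclideanSpace.single i (1:ℝ)) η
      rw [EuclideanSpace.inner_single_left] at hcs
      simpa using hcs
    have h3 := abs_lt.mp (h2.trans_lt h1)
    exact ⟨h3.1, h3.2⟩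
  have step2 : (∫ η in A, r / (1 + (r * η i0) ^ 2)) ≤
      ∫ η in B, r / (1 + (r * η i0) ^ 2) := by
    apply setIntegral_mono_set hint
    · filter_upwards with η
      positivity
    · exact Filter.Eventually.of_forall hsub |>.mono fun x h => h
  refine step2.trans ?_
  have step3 : (∫ η in B, r / (1 + (r * η i0) ^ 2)) =
      ∫ x in S, r / (1 + (r * x i0) ^ 2) := by
    rw [hBdef, ← hφmp.setIntegral_preimage_emb φ.measurableEmbedding
      (fun x => r / (1 + (r * x i0) ^ 2)) S]
    rfl
  rw [step3]
  classical
  set F : Fin n → ℝ → ℝ := fun i =>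
    Set.indicator (Set.Ioo (-4:ℝ) 4) (fun t => if i = i0 then r / (1 + (r * t) ^ 2) else 1)
    with hFdef
  have hprod : ∀ x : Fin n → ℝ,
      S.indicator (fun y => r / (1 + (r * y i0) ^ 2)) x = ∏ i, F i (x i) := by
    intro x
    by_cases hx : x ∈ S
    · rw [Set.indicator_of_mem hx]
      have hFx : ∀ i, F i (x i) = if i = i0 then r / (1 + (r * x i) ^ 2) else 1 := fun i =>
        Set.indicator_of_mem (hx i (Set.mem_univ i)) _
      rw [Finset.prod_congr rfl (fun i _ => hFx i), Finset.prod_ite_eq' Finset.univ i0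
        (fun i => r / (1 + (r * x i) ^ 2)), if_pos (Finset.mem_univ i0)]
    · rw [Set.indicator_of_notMem hx]
      rw [hSdef, Set.mem_pi] at hx
      push_neg at hx
      obtain ⟨i, _, hi⟩ := hx
      exact (Finset.prod_eq_zero (Finset.mem_univ i) (Set.indicator_of_notMem hi _)).symm
  have step4 : (∫ x in S, r / (1 + (r * x i0) ^ 2)) = ∏ i, ∫ t : ℝ, F i t := by
    rw [← MeasureTheory.integral_indicator hSmeas]
    rw [show (S.indicator fun y => r / (1 + (r * y i0) ^ 2)) = fun x => ∏ i, F i (x i)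
      from funext hprod]
    exact MeasureTheory.integral_fintype_prod_eq_prod F
  rw [step4]
  have hFi : ∀ i, (∫ t : ℝ, F i t) =
      if i = i0 then (∫ t in Set.Ioo (-4:ℝ) 4, r / (1 + (r * t) ^ 2)) else 8 := by
    intro i
    rw [hFdef]
    rw [MeasureTheory.integral_indicator measurableSet_Ioo]
    by_cases hi : i = i0
    · simp only [hi, if_true]
    · simp only [hi, if_false]
      rw [MeasureTheory.setIntegral_const]
      simp [Real.volume_Ioo]
      norm_num
  have hI := oneD_aux r
  have hI0 := oneD_nonneg r hr0.le
  calc (∏ i, ∫ t : ℝ, F i t)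
      = (∫ t : ℝ, F i0 t) * ∏ i ∈ Finset.univ.erase i0, ∫ t : ℝ, F i t :=
        (Finset.mul_prod_erase _ _ (Finset.mem_univ i0)).symm
    _ = (∫ t in Set.Ioo (-4:ℝ) 4, r / (1 + (r * t) ^ 2)) * 8 ^ (n - 1) := by
        rw [hFi i0, if_pos rfl]
        congr 1
        rw [Finset.prod_congr rfl (fun i hi => by rw [hFi i, if_neg (Finset.ne_of_mem_erase hi)]),
          Finset.prod_const, Finset.card_erase_of_mem (Finset.mem_univ i0), Finset.card_univ,
          Fintype.card_fin]
    _ ≤ Real.pi * 8 ^ (n - 1) := by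
        apply mul_le_mul_of_nonneg_right _ (by positivity)
        simpa [mul_comm] using hI
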